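/- Let (X,d) be a Polish metric space and F_X the equivalence relation on X^ω defined by x⃗ F_X y⃗ iff there is C > 0 such that every x(i) is within distance C of some y(j) and every y(i) is within distance C of some x(j). Then F_X is Borel reducible to the equivalence relation ℓ_∞ on ℝ^ω. -/

import Mathlib

open Metric EMetric TopologicalSpace

/-- Key inequality: if every point of `range y` is within `C` of `range x`, then
`infDist q (range x) ≤ infDist q (range y) + C`. -/
lemma infDist_le_aux {X : Type*} [MetricSpace X] (q : X) (x y : ℕ → X) (C : ℝ)
    (h : ∀ i, ∃ j, dist (y i) (x j) < C) :
    Metric.infDist q (Set.range x) ≤ Metric.infDist q (Set.range y) + C := by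
  have hne : (Set.range y).Nonempty := Set.range_nonempty _
  have : ∀ z ∈ Set.range y, Metric.infDist q (Set.range x) - C ≤ dist q z := by
    rintro z ⟨i, rfl⟩
    obtain ⟨j, hj⟩ := h i
    have h1 : Metric.infDist q (Set.range x) ≤ dist q (x j) :=
      Metric.infDist_le_dist_of_mem ⟨j, rfl⟩
    have h2 : dist q (x j) ≤ dist q (y i) + dist (y i) (x j) := dist_triangle _ _ _
    linarith [hj.le]
  by_contra h'
  push_neg at h'
  obtain ⟨z, hz, hz'⟩ := (Metric.infDist_lt_iff hne).mp
    (show Metric.infDist q (Set.range y) < Metric.infDist q (Set.range x) - C by linarith)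
  exact absurd hz' (not_lt.mpr (this z hz))

/-- For a Polish metric space `X`, the relation `F_X` on `X^ω` (boundedly mutually
covering sequences) is Borel reducible to `ℓ_∞` on `ℝ^ω`. -/
theorem FX_reducible_to_linfty
    (X : Type*) [MetricSpace X] [CompleteSpace X] [SecondCountableTopology X]
    [MeasurableSpace X] [BorelSpace X] :
    ∃ f : (ℕ → X) → (ℕ → ℝ), Measurable f ∧
      ∀ x y : ℕ → X,
        (∃ C > (0:ℝ), (∀ i, ∃ j, dist (x i) (y j) < C) ∧ (∀ i, ∃ j, dist (y i) (x j) < C))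
          ↔ (∃ C : ℝ, ∀ n, |f x n - f y n| < C) := by
  by_cases hX : IsEmpty X
  · refine ⟨fun _ _ => 0, measurable_const, fun x y => ?_⟩
    exact (hX.false (x 0)).elim
  · haveI : Nonempty X := not_isEmpty_iff.mp hX
    set u : ℕ → X := TopologicalSpace.denseSeq X with hu
    refine ⟨fun x n => Metric.infDist (u n) (Set.range x), ?_, ?_⟩
    · apply measurable_pi_lambda
      intro n
      have heq : (fun x : ℕ → X => Metric.infDist (u n) (Set.range x))
          = fun x => (⨅ i, edist (u n) (x i)).toReal := by
        funext x
        rw [Metric.infDist, Metric.infEDist]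
        congr 1
        exact iInf_range
      rw [heq]
      apply ENNReal.measurable_toReal.comp
      apply Measurable.iInf
      intro i
      exact (continuous_const.edist continuous_id).measurable.comp (measurable_pi_apply i)
    · intro x y
      constructor
      · rintro ⟨C, hC, h1, h2⟩
        refine ⟨C + 1, fun n => ?_⟩
        have a1 := infDist_le_aux (u n) x y C h2
        have a2 := infDist_le_aux (u n) y x C h1
        rw [abs_lt]; constructor <;> linarith
      · rintro ⟨C, hC⟩
        have hC0 : 0 ≤ C := le_of_lt (lt_of_le_of_lt (abs_nonneg _) (hC 0))
        refine ⟨C + 3, by linarith, ?_, ?_⟩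
        · intro i
          obtain ⟨n, hn⟩ := Metric.denseRange_iff.mp (TopologicalSpace.denseRange_denseSeq X) (x i) 1 one_pos
          rw [← hu, dist_comm] at hn
          have hfx : Metric.infDist (u n) (Set.range x) ≤ dist (u n) (x i) :=
            Metric.infDist_le_dist_of_mem ⟨i, rfl⟩
          have habs := abs_lt.mp (hC n)
          simp only at habs
          have hylt : Metric.infDist (u n) (Set.range y) < C + 2 := by linarith
          obtain ⟨z, ⟨j, rfl⟩, hz⟩ :=
            (Metric.infDist_lt_iff (Set.range_nonempty _)).mp hylt
          exact ⟨j, by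
            have := dist_triangle (x i) (u n) (y j)
            rw [dist_comm (x i) (u n)] at this
            linarith [hn]⟩
        · intro i
          obtain ⟨n, hn⟩ := Metric.denseRange_iff.mp (TopologicalSpace.denseRange_denseSeq X) (y i) 1 one_pos
          rw [← hu, dist_comm] at hn
          have hfy : Metric.infDist (u n) (Set.range y) ≤ dist (u n) (y i) :=
            Metric.infDist_le_dist_of_mem ⟨i, rfl⟩
          have habs := abs_lt.mp (hC n)
          simp only at habs
          have hxlt : Metric.infDist (u n) (Set.range x) < C + 2 := by linarith
          obtain ⟨z, ⟨j, rfl⟩, hz⟩ :=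
            (Metric.infDist_lt_iff (Set.range_nonempty _)).mp hxlt
          exact ⟨j, by
            have := dist_triangle (y i) (u n) (x j)
            rw [dist_comm (y i) (u n)] at this
            linarith [hn]⟩
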